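/- Let (Z, m) be a complete metric space and let ψ : [0,∞) → [0,∞) be a continuous, increasing function with ψ(x) < x for all x > 0. If an operator T : Z → Z satisfies m(Tv₁, Tv₂) ≤ ψ(m(v₁, v₂)) for all v₁, v₂ ∈ Z, then T has a unique fixed point v* ∈ Z, and for every v ∈ Z the iterates satisfy m(T⁽ⁿ⁾v, v*) → 0 as n → ∞, where T⁽ⁿ⁾ denotes the n-fold composition of T with itself. -/

import Mathlib

open NNReal Filter

/-- Matkowski's generalisation of the Banach contraction principle:
if `ψ : [0,∞) → [0,∞)` is continuous, increasing and `ψ x < x` for `x > 0`,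
and `T : Z → Z` satisfies `dist (T v₁) (T v₂) ≤ ψ (dist v₁ v₂)` on a complete
metric space `Z`, then `T` has a unique fixed point `v*` and the iterates
`T⁽ⁿ⁾ v` converge to `v*` for every `v ∈ Z`. -/
theorem matkowski_fixed_point {Z : Type*} [MetricSpace Z] [CompleteSpace Z] [Nonempty Z]
    (ψ : ℝ≥0 → ℝ≥0) (hψc : Continuous ψ) (hψm : Monotone ψ)
    (hψlt : ∀ x : ℝ≥0, 0 < x → ψ x < x)
    (T : Z → Z)
    (hT : ∀ v₁ v₂ : Z, nndist (T v₁) (T v₂) ≤ ψ (nndist v₁ v₂)) :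
    ∃ vstar : Z, T vstar = vstar ∧ (∀ w : Z, T w = w → w = vstar) ∧
      ∀ v : Z, Tendsto (fun n : ℕ => T^[n] v) atTop (nhds vstar) := by
  have hle : ∀ y : ℝ≥0, ψ y ≤ y := by
    intro y
    rcases eq_zero_or_pos y with h | h
    · subst h
      by_contra hc
      have h0 : 0 < ψ 0 := not_le.mp hc
      exact absurd (hψm (zero_le : 0 ≤ ψ 0)) (not_le.mpr (hψlt _ h0))
    · exact (hψlt y h).le
  -- iterates of ψ tend to 0
  have hiter : ∀ x : ℝ≥0, Tendsto (fun n => ψ^[n] x) atTop (nhds 0) := by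
    intro x
    have hanti : Antitone (fun n => ψ^[n] x) := antitone_nat_of_succ_le (fun n => by
      rw [Function.iterate_succ_apply']; exact hle _)
    have hbdd : BddBelow (Set.range fun n => ψ^[n] x) := OrderBot.bddBelow _
    have hL := tendsto_atTop_ciInf hanti hbdd
    set L := ⨅ n, ψ^[n] x with hLdef
    have h1 : Tendsto (fun n => ψ^[n + 1] x) atTop (nhds L) :=
      hL.comp (tendsto_add_atTop_nat 1)
    have h2 : Tendsto (fun n => ψ (ψ^[n] x)) atTop (nhds (ψ L)) :=
      (hψc.tendsto L).comp hL
    have h3 : ψ L = L := tendsto_nhds_unique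
      (by simpa [Function.iterate_succ_apply'] using h2) h1
    have hL0 : L = 0 := by
      by_contra h
      exact absurd h3 (ne_of_lt (hψlt L (pos_iff_ne_zero.mpr h)))
    rwa [hL0] at hL
  -- iterated contraction estimate
  have hiterT : ∀ (n : ℕ) (a b : Z), nndist (T^[n] a) (T^[n] b) ≤ ψ^[n] (nndist a b) := by
    intro n
    induction n with
    | zero => simp
    | succ n ih =>
      intro a b
      rw [Function.iterate_succ_apply' T n a, Function.iterate_succ_apply' T n b,
        Function.iterate_succ_apply' ψ n]
      exact (hT _ _).trans (hψm (ih a b))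
  -- the orbit of any point is Cauchy
  have hcauchy : ∀ v : Z, CauchySeq (fun n => T^[n] v) := by
    intro v
    have hd : Tendsto (fun n => nndist (T^[n] v) (T^[n + 1] v)) atTop (nhds 0) := by
      refine tendsto_of_tendsto_of_tendsto_of_le_of_le tendsto_const_nhds
        (hiter (nndist v (T v))) (fun n => zero_le) (fun n => ?_)
      have : T^[n + 1] v = T^[n] (T v) := Function.iterate_succ_apply T n v
      rw [this]
      exact hiterT n v (T v)
    rw [Metric.cauchySeq_iff']
    intro ε hε
    set ε' : ℝ≥0 := ⟨ε / 2, le_of_lt (half_pos hε)⟩ with hε'def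
    have hε' : 0 < ε' := by
      rw [← NNReal.coe_pos]
      exact half_pos hε
    have hδ : 0 < ε' - ψ ε' := tsub_pos_of_lt (hψlt ε' hε')
    obtain ⟨N, hN⟩ := eventually_atTop.mp (hd.eventually (gt_mem_nhds hδ))
    refine ⟨N, fun n hn => ?_⟩
    have claim : ∀ m, nndist (T^[N + m] v) (T^[N] v) ≤ ε' := by
      intro m
      induction m with
      | zero => simp
      | succ m ih =>
        have h1 := nndist_triangle (T^[N + m + 1] v) (T^[N + 1] v) (T^[N] v)
        have h2 : nndist (T^[N + m + 1] v) (T^[N + 1] v)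
            ≤ ψ (nndist (T^[N + m] v) (T^[N] v)) := by
          rw [show N + m + 1 = (N + m) + 1 from rfl,
            Function.iterate_succ_apply' T (N + m) v, Function.iterate_succ_apply' T N v]
          exact hT _ _
        have h3 : nndist (T^[N + 1] v) (T^[N] v) ≤ ε' - ψ ε' := by
          rw [nndist_comm]
          exact (hN N le_rfl).le
        calc nndist (T^[N + m + 1] v) (T^[N] v)
            ≤ ψ (nndist (T^[N + m] v) (T^[N] v)) + nndist (T^[N + 1] v) (T^[N] v) :=
              h1.trans (add_le_add_left h2 _)
          _ ≤ ψ ε' + (ε' - ψ ε') := add_le_add (hψm ih) h3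
          _ = ε' := add_tsub_cancel_of_le (hle ε')
    obtain ⟨m, rfl⟩ := Nat.exists_eq_add_of_le hn
    calc dist (T^[N + m] v) (T^[N] v) = (nndist (T^[N + m] v) (T^[N] v) : ℝ) :=
          dist_nndist _ _
      _ ≤ (ε' : ℝ) := NNReal.coe_le_coe.mpr (claim m)
      _ = ε / 2 := rfl
      _ < ε := half_lt_self hε
  obtain ⟨v₀⟩ := ‹Nonempty Z›
  obtain ⟨vstar, hvlim⟩ := cauchySeq_tendsto_of_complete (hcauchy v₀)
  have hTcont : Continuous T := by
    refine (LipschitzWith.of_dist_le_mul (K := 1) (fun a b => ?_)).continuous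
    calc dist (T a) (T b) = (nndist (T a) (T b) : ℝ) := dist_nndist _ _
      _ ≤ (ψ (nndist a b) : ℝ) := NNReal.coe_le_coe.mpr (hT a b)
      _ ≤ (nndist a b : ℝ) := NNReal.coe_le_coe.mpr (hle _)
      _ = (1 : ℝ≥0) * dist a b := by rw [NNReal.coe_one, one_mul, dist_nndist]
  have hfix : T vstar = vstar := by
    have h1 : Tendsto (fun n => T^[n + 1] v₀) atTop (nhds vstar) :=
      hvlim.comp (tendsto_add_atTop_nat 1)
    have h2 : Tendsto (fun n => T (T^[n] v₀)) atTop (nhds (T vstar)) :=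
      (hTcont.tendsto vstar).comp hvlim
    exact tendsto_nhds_unique (by simpa [Function.iterate_succ_apply'] using h2) h1
  refine ⟨vstar, hfix, ?_, ?_⟩
  · intro w hw
    by_contra hne
    have hpos : 0 < nndist w vstar :=
      pos_iff_ne_zero.mpr (fun hz => hne (nndist_eq_zero.mp hz))
    have hle2 : nndist w vstar ≤ ψ (nndist w vstar) := by
      have := hT w vstar
      rwa [hw, hfix] at this
    exact absurd hle2 (not_le.mpr (hψlt _ hpos))
  · intro v
    have hfixn : ∀ n, T^[n] vstar = vstar := fun n => Function.iterate_fixed hfix n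
    have hle2 : ∀ n, nndist (T^[n] v) vstar ≤ ψ^[n] (nndist v vstar) := fun n => by
      have := hiterT n v vstar
      rwa [hfixn n] at this
    have hten : Tendsto (fun n => nndist (T^[n] v) vstar) atTop (nhds 0) :=
      tendsto_of_tendsto_of_tendsto_of_le_of_le tendsto_const_nhds (hiter _)
        (fun n => zero_le) hle2
    rw [tendsto_iff_dist_tendsto_zero]
    have h := NNReal.tendsto_coe.mpr hten
    simp only [← dist_nndist] at h
    exact h
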